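/- (Theorem 3, privacy–utility trade-off) Let F = {(x,u) ∈ ℝ^n × ℝ^p : x = A x + B u and C₁ x = r} be the feasible set. Suppose (x*, u*) ∈ F minimizes J over F and (x_p, u_p) ∈ F minimizes J_p over F. Define the utility loss ε = J(x_p, u_p) − J(x*, u*) and the nominal privacy gain δ = u*ᵀ S u* − u_pᵀ S u_p. Then μ · (u*ᵀ S u*) ≥ μ · δ ≥ ε. -/

import Mathlib

open Matrix

/-- **Theorem 3 (privacy–utility trade-off).**
If `(x*, u*)` minimizes the utility cost `J` over the steady-state feasible set `F` and
`(x_p, u_p)` minimizes the regularized cost `J_p = J + μ·uᵀSu` over `F`, then the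
nominal privacy gain `δ` is lower bounded by the utility loss `ε` and upper bounded by the
current privacy cost: `μ·(u*ᵀSu*) ≥ μ·δ ≥ ε`. -/
theorem privacy_utility_tradeoff
    (n p q : ℕ)
    (A : Matrix (Fin n) (Fin n) ℝ) (B : Matrix (Fin n) (Fin p) ℝ)
    (C₁ : Matrix (Fin q) (Fin n) ℝ) (r : Fin q → ℝ)
    (Q : Matrix (Fin n) (Fin n) ℝ) (R : Matrix (Fin p) (Fin p) ℝ)
    (S : Matrix (Fin p) (Fin p) ℝ)
    (hQ : Q.PosDef) (hR : R.PosDef) (hS : S.PosSemidef)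
    (μ : ℝ) (hμ : 0 ≤ μ)
    (J Jp : (Fin n → ℝ) → (Fin p → ℝ) → ℝ)
    (hJ : ∀ x u, J x u = x ⬝ᵥ (Q *ᵥ x) + u ⬝ᵥ (R *ᵥ u))
    (hJp : ∀ x u, Jp x u = J x u + μ * (u ⬝ᵥ (S *ᵥ u)))
    (F : (Fin n → ℝ) → (Fin p → ℝ) → Prop)
    (hF : ∀ x u, F x u ↔ (x = A *ᵥ x + B *ᵥ u ∧ C₁ *ᵥ x = r))
    (xs : Fin n → ℝ) (us : Fin p → ℝ) (xp : Fin n → ℝ) (up : Fin p → ℝ)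
    (hstarFeas : F xs us) (hstarOpt : ∀ x u, F x u → J xs us ≤ J x u)
    (hpFeas : F xp up) (hpOpt : ∀ x u, F x u → Jp xp up ≤ Jp x u)
    (ε δ : ℝ)
    (hε : ε = J xp up - J xs us)
    (hδ : δ = us ⬝ᵥ (S *ᵥ us) - up ⬝ᵥ (S *ᵥ up)) :
    μ * (us ⬝ᵥ (S *ᵥ us)) ≥ μ * δ ∧ μ * δ ≥ ε := by
  have h1 := hpOpt xs us hstarFeas
  rw [hJp, hJp] at h1
  have hup : 0 ≤ up ⬝ᵥ (S *ᵥ up) := by simpa using hS.dotProduct_mulVec_nonneg up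
  constructor
  · rw [hδ]; nlinarith [mul_nonneg hμ hup]
  · rw [hε, hδ]; nlinarith
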